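/- Let P be a probability distribution on a finite alphabet X and ε > 0. The probability under the product distribution P^n that a sequence x^n is ε-typical is at least 1 - 2|X| exp(-nε²/3), where x^n is ε-typical if for every x ∈ X, |N(x|x^n) - P(x)n| ≤ εn and N(x|x^n) = 0 whenever P(x) = 0 (N(x|x^n) is the number of occurrences of x in x^n). -/

import Mathlib

open Finset

lemma exp_quad {x : ℝ} (hx : |x| ≤ 1) : Real.exp x ≤ 1 + x + (3/4) * x^2 := by
  have h := Real.exp_bound hx (n := 2) two_pos
  have h2 : ∑ m ∈ range 2, x ^ m / m.factorial = 1 + x := by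
    simp [Finset.sum_range_succ]
  rw [h2] at h
  have h3 : |x| ^ 2 = x ^ 2 := sq_abs x
  have := (abs_sub_le_iff.1 h).1
  rw [h3] at this
  norm_num at this ⊢
  nlinarith [this]

lemma exp_interp {c t : ℝ} (hc0 : 0 ≤ c) (hc1 : c ≤ 1) :
    Real.exp (t * c) ≤ 1 + c * (Real.exp t - 1) := by
  have h := convexOn_exp.2 (Set.mem_univ 0) (Set.mem_univ t)
    (by linarith : (0:ℝ) ≤ 1 - c) hc0 (by ring)
  simp only [smul_eq_mul, mul_zero, zero_add, Real.exp_zero, mul_one] at h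
  calc Real.exp (t * c) = Real.exp (c * t) := by rw [mul_comm]
    _ ≤ (1 - c) + c * Real.exp t := h
    _ = 1 + c * (Real.exp t - 1) := by ring

open Classical in
lemma chernoff {X : Type*} [Fintype X] (n : ℕ) (P : X → ℝ)
    (hP0 : ∀ x, 0 ≤ P x) (hP1 : ∑ x, P x = 1) (c : X → ℝ)
    (hc0 : ∀ y, 0 ≤ c y) (hc1 : ∀ y, c y ≤ 1)
    (ε : ℝ) (hε : 0 < ε) (hε1 : ε ≤ 1) :
    ∑ f : Fin n → X,
      (if (∑ y, c y * P y) * n + ε * n < ∑ i, c (f i) then ∏ i, P (f i) else 0)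
      ≤ Real.exp (-(n * ε ^ 2) / 3) := by
  set t : ℝ := 2 * ε / 3 with ht_def
  have ht0 : 0 < t := by positivity
  have ht1 : |t| ≤ 1 := by rw [abs_of_pos ht0]; linarith
  set μ : ℝ := ∑ y, c y * P y with hμ_def
  have hμ0 : 0 ≤ μ := Finset.sum_nonneg fun y _ => mul_nonneg (hc0 y) (hP0 y)
  have hμ1 : μ ≤ 1 := by
    rw [hμ_def, ← hP1]
    exact Finset.sum_le_sum fun y _ =>
      mul_le_of_le_one_left (hP0 y) (hc1 y)
  -- Step 1: pointwise exponential bound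
  have step1 : ∑ f : Fin n → X,
      (if μ * n + ε * n < ∑ i, c (f i) then ∏ i, P (f i) else 0)
      ≤ ∑ f : Fin n → X,
        Real.exp (t * (∑ i, c (f i) - μ * n - ε * n)) * ∏ i, P (f i) := by
    refine Finset.sum_le_sum fun f _ => ?_
    have hwf : 0 ≤ ∏ i, P (f i) := Finset.prod_nonneg fun i _ => hP0 _
    split_ifs with h
    · refine le_mul_of_one_le_left hwf ?_
      rw [← Real.exp_zero]
      exact Real.exp_le_exp.2 (by nlinarith)
    · positivity

  -- Step 2: factorization
  have step2 : ∑ f : Fin n → X,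
      Real.exp (t * (∑ i, c (f i) - μ * n - ε * n)) * ∏ i, P (f i)
      = Real.exp (-(t * (μ * n + ε * n))) * (∑ y, Real.exp (t * c y) * P y) ^ n := by
    rw [Fintype.sum_pow, Finset.mul_sum]
    refine Finset.sum_congr rfl fun f _ => ?_
    rw [Finset.prod_mul_distrib, ← Real.exp_sum, ← Finset.mul_sum, ← mul_assoc,
      ← Real.exp_add]
    rw [show -(t * (μ * n + ε * n)) + t * ∑ i, c (f i)
        = t * (∑ i, c (f i) - μ * n - ε * n) from by ring]
  -- Step 3: bound the mgf of one letter
  have step3 : ∑ y, Real.exp (t * c y) * P y ≤ Real.exp (μ * (Real.exp t - 1)) := by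
    have h1 : ∑ y, Real.exp (t * c y) * P y ≤ 1 + μ * (Real.exp t - 1) := by
      have h2 : ∑ y, Real.exp (t * c y) * P y
          ≤ ∑ y, (P y + (Real.exp t - 1) * (c y * P y)) := by
        refine Finset.sum_le_sum fun y _ => ?_
        have h3 := exp_interp (hc0 y) (hc1 y) (t := t)
        have h4 := hP0 y
        nlinarith [h3, h4]
      calc ∑ y, Real.exp (t * c y) * P y
          ≤ ∑ y, (P y + (Real.exp t - 1) * (c y * P y)) := h2
        _ = (∑ y, P y) + (Real.exp t - 1) * ∑ y, c y * P y := by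
            rw [Finset.sum_add_distrib, ← Finset.mul_sum]
        _ = 1 + μ * (Real.exp t - 1) := by rw [hP1]; ring
    calc ∑ y, Real.exp (t * c y) * P y ≤ 1 + μ * (Real.exp t - 1) := h1
      _ ≤ Real.exp (μ * (Real.exp t - 1)) := by
          have := Real.add_one_le_exp (μ * (Real.exp t - 1))
          linarith
  -- Step 4: assemble
  have hS0 : 0 ≤ ∑ y, Real.exp (t * c y) * P y :=
    Finset.sum_nonneg fun y _ => mul_nonneg (Real.exp_pos _).le (hP0 y)
  have step4 : Real.exp (-(t * (μ * n + ε * n))) * (∑ y, Real.exp (t * c y) * P y) ^ n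
      ≤ Real.exp (-(t * (μ * n + ε * n)) + n * (μ * (Real.exp t - 1))) := by
    rw [Real.exp_add, Real.exp_nat_mul]
    exact mul_le_mul_of_nonneg_left (pow_le_pow_left₀ hS0 step3 n) (Real.exp_pos _).le
  -- Step 5: the exponent inequality
  have hn : (0:ℝ) ≤ (n:ℝ) := Nat.cast_nonneg n
  have hE : Real.exp t - 1 ≤ t + (3/4) * t^2 := by
    have := exp_quad ht1; linarith
  have hexps : -(t * (μ * n + ε * n)) + n * (μ * (Real.exp t - 1)) ≤ -(n * ε ^ 2) / 3 := by
    have ht2 : t^2 = 4/9 * ε^2 := by rw [ht_def]; ring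
    have h1 : μ * (Real.exp t - 1) ≤ μ * t + (3/4) * t^2 := by
      nlinarith [mul_le_mul_of_nonneg_left hE hμ0, mul_le_of_le_one_left (by positivity : (0:ℝ) ≤ (3/4) * t^2) hμ1]
    have h2 : -(t * (μ * n + ε * n)) + n * (μ * (Real.exp t - 1))
        ≤ n * (- (t * ε) + (3/4) * t^2 - t * μ + μ * t) := by
      nlinarith [mul_le_mul_of_nonneg_left h1 hn]
    have h3 : (n:ℝ) * (- (t * ε) + (3/4) * t^2 - t * μ + μ * t) = -(n * ε ^ 2) / 3 := by
      rw [ht_def]; ring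
    linarith
  calc ∑ f : Fin n → X,
      (if μ * n + ε * n < ∑ i, c (f i) then ∏ i, P (f i) else 0)
      ≤ Real.exp (-(t * (μ * n + ε * n)) + n * (μ * (Real.exp t - 1))) := by
        refine le_trans step1 ?_; rw [step2]; exact step4
    _ ≤ Real.exp (-(n * ε ^ 2) / 3) := Real.exp_le_exp.2 hexps

open Classical in
theorem typical_sequences {X : Type*} [Fintype X] (n : ℕ) (P : X → ℝ)
    (hP0 : ∀ x, 0 ≤ P x) (hP1 : ∑ x, P x = 1) (ε : ℝ) (hε : 0 < ε) :
    1 - 2 * (Fintype.card X : ℝ) * Real.exp (-(n * ε ^ 2) / 3) ≤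
      ∑ f : Fin n → X,
        (if (∀ x : X, |((univ.filter (fun i => f i = x)).card : ℝ) - P x * n| ≤ ε * n
              ∧ (P x = 0 → (univ.filter (fun i => f i = x)).card = 0)) then
          ∏ i, P (f i) else 0) := by
  have hw : ∀ f : Fin n → X, 0 ≤ ∏ i, P (f i) :=
    fun f => Finset.prod_nonneg fun i _ => hP0 _
  have hsum : ∑ f : Fin n → X, ∏ i, P (f i) = 1 := by
    rw [← Fintype.sum_pow, hP1, one_pow]
  have hepos : (0:ℝ) ≤ 2 * (Fintype.card X : ℝ) * Real.exp (-(n * ε ^ 2) / 3) := by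
    positivity
  by_cases hε1 : ε ≤ 1
  · -- main case
    -- upper-tail Chernoff for each letter
    have hB : ∀ x : X, ∑ f : Fin n → X,
        (if P x * n + ε * n < ((univ.filter (fun i => f i = x)).card : ℝ)
          then ∏ i, P (f i) else 0) ≤ Real.exp (-(n * ε ^ 2) / 3) := by
      intro x
      have h := chernoff n P hP0 hP1 (fun y => if y = x then (1:ℝ) else 0)
        (fun y => by split <;> norm_num)
        (fun y => by split <;> norm_num) ε hε hε1
      have hμ : (∑ y, (if y = x then (1:ℝ) else 0) * P y) = P x := by
        simp
      have hNs : ∀ f : Fin n → X, (∑ i, (if f i = x then (1:ℝ) else 0))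
          = ((univ.filter (fun i => f i = x)).card : ℝ) := by
        intro f
        rw [Finset.card_filter]
        push_cast
        rfl
      simp only [hμ, hNs] at h
      exact h
    -- lower-tail Chernoff for each letter
    have hC : ∀ x : X, ∑ f : Fin n → X,
        (if (1 - P x) * n + ε * n < (n:ℝ) - ((univ.filter (fun i => f i = x)).card : ℝ)
          then ∏ i, P (f i) else 0) ≤ Real.exp (-(n * ε ^ 2) / 3) := by
      intro x
      have h := chernoff n P hP0 hP1 (fun y => if y = x then (0:ℝ) else 1)
        (fun y => by split <;> norm_num)
        (fun y => by split <;> norm_num) ε hε hε1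
      have hμ : (∑ y, (if y = x then (0:ℝ) else 1) * P y) = 1 - P x := by
        have e1 : ∀ y : X, (if y = x then (0:ℝ) else 1) * P y
            = P y - (if y = x then P y else 0) := by
          intro y; split <;> ring
        rw [Finset.sum_congr rfl fun y _ => e1 y, Finset.sum_sub_distrib, hP1,
          Finset.sum_ite_eq' univ x P, if_pos (mem_univ x)]
      have hNs : ∀ f : Fin n → X, (∑ i, (if f i = x then (0:ℝ) else 1))
          = (n:ℝ) - ((univ.filter (fun i => f i = x)).card : ℝ) := by
        intro f
        have e1 : ∀ i : Fin n, (if f i = x then (0:ℝ) else 1)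
            = 1 - (if f i = x then 1 else 0) := by
          intro i; split <;> ring
        rw [Finset.sum_congr rfl fun i _ => e1 i, Finset.sum_sub_distrib,
          Finset.sum_const, Finset.card_univ, Fintype.card_fin, nsmul_eq_mul, mul_one,
          Finset.card_filter]
        push_cast
        rfl
      simp only [hμ, hNs] at h
      exact h
    -- pointwise union bound
    have hpt : ∀ f : Fin n → X,
        (if ¬ (∀ x : X, |((univ.filter (fun i => f i = x)).card : ℝ) - P x * n| ≤ ε * n
              ∧ (P x = 0 → (univ.filter (fun i => f i = x)).card = 0)) then
          ∏ i, P (f i) else 0)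
        ≤ ∑ x : X,
          ((if P x * n + ε * n < ((univ.filter (fun i => f i = x)).card : ℝ)
              then ∏ i, P (f i) else 0)
           + (if (1 - P x) * n + ε * n < (n:ℝ) - ((univ.filter (fun i => f i = x)).card : ℝ)
              then ∏ i, P (f i) else 0)) := by
      intro f
      have hnn : ∀ x : X, (0:ℝ) ≤
          ((if P x * n + ε * n < ((univ.filter (fun i => f i = x)).card : ℝ)
              then ∏ i, P (f i) else 0)
           + (if (1 - P x) * n + ε * n < (n:ℝ) - ((univ.filter (fun i => f i = x)).card : ℝ)
              then ∏ i, P (f i) else 0)) := by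
        intro x
        have := hw f
        split_ifs <;> simp <;> linarith
      have hRHS : (0:ℝ) ≤ ∑ x : X,
          ((if P x * n + ε * n < ((univ.filter (fun i => f i = x)).card : ℝ)
              then ∏ i, P (f i) else 0)
           + (if (1 - P x) * n + ε * n < (n:ℝ) - ((univ.filter (fun i => f i = x)).card : ℝ)
              then ∏ i, P (f i) else 0)) := Finset.sum_nonneg fun x _ => hnn x
      by_cases h : (∀ x : X, |((univ.filter (fun i => f i = x)).card : ℝ) - P x * n| ≤ ε * n
              ∧ (P x = 0 → (univ.filter (fun i => f i = x)).card = 0))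
      · have he : (if ¬ (∀ x : X, |((univ.filter (fun i => f i = x)).card : ℝ) - P x * n| ≤ ε * n
              ∧ (P x = 0 → (univ.filter (fun i => f i = x)).card = 0)) then
            ∏ i, P (f i) else 0) = 0 := if_neg (not_not_intro h)
        rw [he]
        exact hRHS
      · have he : (if ¬ (∀ x : X, |((univ.filter (fun i => f i = x)).card : ℝ) - P x * n| ≤ ε * n
              ∧ (P x = 0 → (univ.filter (fun i => f i = x)).card = 0)) then
            ∏ i, P (f i) else 0) = ∏ i, P (f i) := if_pos h
        rw [he]
        push_neg at h
        obtain ⟨x, hx⟩ := h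
        by_cases habs : |((univ.filter (fun i => f i = x)).card : ℝ) - P x * n| ≤ ε * n
        · obtain ⟨hx0, hcard⟩ := hx habs
          obtain ⟨i, hi⟩ := Finset.card_ne_zero.mp hcard
          have hz : ∏ i, P (f i) = 0 :=
            Finset.prod_eq_zero (mem_univ i) (by rw [(Finset.mem_filter.mp hi).2, hx0])
          exact le_trans (le_of_eq hz) hRHS
        · rw [abs_le, not_and_or] at habs
          push_neg at habs
          have hsingle := Finset.single_le_sum (f := fun x : X =>
            ((if P x * n + ε * n < ((univ.filter (fun i => f i = x)).card : ℝ)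
                then ∏ i, P (f i) else 0)
             + (if (1 - P x) * n + ε * n < (n:ℝ) - ((univ.filter (fun i => f i = x)).card : ℝ)
                then ∏ i, P (f i) else 0))) (fun x _ => hnn x) (mem_univ x)
          have hBnn : (0:ℝ) ≤ (if P x * n + ε * n < ((univ.filter (fun i => f i = x)).card : ℝ)
              then ∏ i, P (f i) else 0) := by
            split_ifs
            · exact hw f
            · exact le_refl 0
          have hCnn : (0:ℝ) ≤ (if (1 - P x) * n + ε * n
                < (n:ℝ) - ((univ.filter (fun i => f i = x)).card : ℝ)
              then ∏ i, P (f i) else 0) := by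
            split_ifs
            · exact hw f
            · exact le_refl 0
          have hmid : ∏ i, P (f i) ≤
              (if P x * n + ε * n < ((univ.filter (fun i => f i = x)).card : ℝ)
                  then ∏ i, P (f i) else 0)
               + (if (1 - P x) * n + ε * n < (n:ℝ) - ((univ.filter (fun i => f i = x)).card : ℝ)
                  then ∏ i, P (f i) else 0) := by
            rcases habs with h1 | h2
            · have he2 : (if (1 - P x) * n + ε * n
                  < (n:ℝ) - ((univ.filter (fun i => f i = x)).card : ℝ)
                  then ∏ i, P (f i) else 0) = ∏ i, P (f i) := if_pos (by linarith)
              linarith [he2]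
            · have he2 : (if P x * n + ε * n < ((univ.filter (fun i => f i = x)).card : ℝ)
                  then ∏ i, P (f i) else 0) = ∏ i, P (f i) := if_pos (by linarith)
              linarith [he2]
          exact le_trans hmid hsingle
    -- assemble
    have hkey : ∑ f : Fin n → X,
        (if ¬ (∀ x : X, |((univ.filter (fun i => f i = x)).card : ℝ) - P x * n| ≤ ε * n
              ∧ (P x = 0 → (univ.filter (fun i => f i = x)).card = 0)) then
          ∏ i, P (f i) else 0)
        ≤ 2 * (Fintype.card X : ℝ) * Real.exp (-(n * ε ^ 2) / 3) := by
      calc ∑ f : Fin n → X,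
          (if ¬ (∀ x : X, |((univ.filter (fun i => f i = x)).card : ℝ) - P x * n| ≤ ε * n
                ∧ (P x = 0 → (univ.filter (fun i => f i = x)).card = 0)) then
            ∏ i, P (f i) else 0)
          ≤ ∑ f : Fin n → X, ∑ x : X,
            ((if P x * n + ε * n < ((univ.filter (fun i => f i = x)).card : ℝ)
                then ∏ i, P (f i) else 0)
             + (if (1 - P x) * n + ε * n < (n:ℝ) - ((univ.filter (fun i => f i = x)).card : ℝ)
                then ∏ i, P (f i) else 0)) := Finset.sum_le_sum fun f _ => hpt f
        _ = ∑ x : X, ∑ f : Fin n → X,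
            ((if P x * n + ε * n < ((univ.filter (fun i => f i = x)).card : ℝ)
                then ∏ i, P (f i) else 0)
             + (if (1 - P x) * n + ε * n < (n:ℝ) - ((univ.filter (fun i => f i = x)).card : ℝ)
                then ∏ i, P (f i) else 0)) := Finset.sum_comm
        _ ≤ ∑ _x : X, (Real.exp (-(n * ε ^ 2) / 3) + Real.exp (-(n * ε ^ 2) / 3)) := by
            refine Finset.sum_le_sum fun x _ => ?_
            rw [Finset.sum_add_distrib]
            exact add_le_add (hB x) (hC x)
        _ = 2 * (Fintype.card X : ℝ) * Real.exp (-(n * ε ^ 2) / 3) := by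
            rw [Finset.sum_const, Finset.card_univ, nsmul_eq_mul]
            ring
    have hsplit : (∑ f : Fin n → X,
        (if (∀ x : X, |((univ.filter (fun i => f i = x)).card : ℝ) - P x * n| ≤ ε * n
              ∧ (P x = 0 → (univ.filter (fun i => f i = x)).card = 0)) then
          ∏ i, P (f i) else 0))
        + (∑ f : Fin n → X,
        (if ¬ (∀ x : X, |((univ.filter (fun i => f i = x)).card : ℝ) - P x * n| ≤ ε * n
              ∧ (P x = 0 → (univ.filter (fun i => f i = x)).card = 0)) then
          ∏ i, P (f i) else 0)) = 1 := by
      rw [← Finset.sum_add_distrib, ← hsum]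
      refine Finset.sum_congr rfl fun f _ => ?_
      by_cases h : (∀ x : X, |((univ.filter (fun i => f i = x)).card : ℝ) - P x * n| ≤ ε * n
              ∧ (P x = 0 → (univ.filter (fun i => f i = x)).card = 0))
      · have e1 : (if (∀ x : X, |((univ.filter (fun i => f i = x)).card : ℝ) - P x * n| ≤ ε * n
              ∧ (P x = 0 → (univ.filter (fun i => f i = x)).card = 0)) then
            ∏ i, P (f i) else 0) = ∏ i, P (f i) := if_pos h
        have e2 : (if ¬ (∀ x : X, |((univ.filter (fun i => f i = x)).card : ℝ) - P x * n| ≤ ε * n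
              ∧ (P x = 0 → (univ.filter (fun i => f i = x)).card = 0)) then
            ∏ i, P (f i) else 0) = 0 := if_neg (not_not_intro h)
        rw [e1, e2, add_zero]
      · have e1 : (if (∀ x : X, |((univ.filter (fun i => f i = x)).card : ℝ) - P x * n| ≤ ε * n
              ∧ (P x = 0 → (univ.filter (fun i => f i = x)).card = 0)) then
            ∏ i, P (f i) else 0) = 0 := if_neg h
        have e2 : (if ¬ (∀ x : X, |((univ.filter (fun i => f i = x)).card : ℝ) - P x * n| ≤ ε * n
              ∧ (P x = 0 → (univ.filter (fun i => f i = x)).card = 0)) then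
            ∏ i, P (f i) else 0) = ∏ i, P (f i) := if_pos h
        rw [e1, e2, zero_add]
    linarith
  · -- ε > 1 : everything with nonzero weight is typical
    push_neg at hε1
    have hall : ∀ f : Fin n → X,
        (if (∀ x : X, |((univ.filter (fun i => f i = x)).card : ℝ) - P x * n| ≤ ε * n
              ∧ (P x = 0 → (univ.filter (fun i => f i = x)).card = 0)) then
          ∏ i, P (f i) else 0) = ∏ i, P (f i) := by
      intro f
      by_cases hf : ∏ i, P (f i) = 0
      · rw [hf]; split <;> rfl
      · rw [if_pos]
        intro x
        have hne : ∀ i, P (f i) ≠ 0 := fun i hi =>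
          hf (Finset.prod_eq_zero (mem_univ i) hi)
        have hcard0 : P x = 0 → (univ.filter (fun i => f i = x)).card = 0 := by
          intro hx
          rw [Finset.card_eq_zero, Finset.filter_eq_empty_iff]
          intro i _ hfi
          exact hne i (by rw [hfi, hx])
        refine ⟨?_, hcard0⟩
        have hNle : ((univ.filter (fun i => f i = x)).card : ℝ) ≤ n := by
          have := Finset.card_filter_le (univ : Finset (Fin n)) (fun i => f i = x)
          simpa using (Nat.cast_le.2 this : _ ≤ ((univ : Finset (Fin n)).card : ℝ))
        have hN0 : (0:ℝ) ≤ ((univ.filter (fun i => f i = x)).card : ℝ) :=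
          Nat.cast_nonneg _
        have hPx1 : P x ≤ 1 := by
          rw [← hP1]
          exact Finset.single_le_sum (fun y _ => hP0 y) (mem_univ x)
        have hn : (0:ℝ) ≤ (n:ℝ) := Nat.cast_nonneg n
        rw [abs_le]
        constructor <;> nlinarith [hP0 x]
    rw [Finset.sum_congr rfl fun f _ => hall f, hsum]
    linarith
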